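/- Let z be a 'doubly-nonnesting' involution in W_n (at most one negated point, and no two 2-element orbits {a,d},{b,c} in [±n] with −d ≠ a < b ≤ c < d). If z(r) < −r for some r ∈ [n], then r ≤ ⌊n/2⌋. -/

import Mathlib

/-- The hyperoctahedral group `W_n`: bijections `w` of `ℤ` with `w (-i) = -(w i)` for
all `i`, fixing every `i` with `|i| > n`.  This is the group of signed permutations of
`[±n] = {-n, …, -1, 1, …, n}`. -/
def WB (n : ℕ) : Subgroup (Equiv.Perm ℤ) where
  carrier := {w | (∀ i : ℤ, w (-i) = -(w i)) ∧ ∀ i : ℤ, (n : ℤ) < |i| → w i = i}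
  one_mem' := by
    constructor <;> intro i <;> simp
  mul_mem' := by
    rintro u v ⟨hu1, hu2⟩ ⟨hv1, hv2⟩
    constructor
    · intro i
      simp only [Equiv.Perm.mul_apply, hv1, hu1]
    · intro i hi
      simp only [Equiv.Perm.mul_apply, hv2 i hi, hu2 i hi]
  inv_mem' := by
    rintro w ⟨h1, h2⟩
    constructor
    · intro i
      apply w.injective
      rw [Equiv.Perm.coe_inv, Equiv.apply_symm_apply, h1, Equiv.apply_symm_apply]
    · intro i hi
      apply w.injective
      rw [Equiv.Perm.coe_inv, Equiv.apply_symm_apply, h2 i hi]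

/-- The set `[±n] = {-n, …, -1, 1, …, n}`. -/
def pmSet (n : ℕ) : Set ℤ := {i | i ≠ 0 ∧ |i| ≤ (n : ℤ)}

/-- An involution `z ∈ W_n` is *doubly-nonnesting* if (i) it has at most one negated
point (`i ∈ [n]` with `z(i) = -i`), and (ii) there are no two orbits `{a,d}`, `{b,c}`
of `z` in `[±n]` with `a < b ≤ c < d` and `a ≠ -d` (so `{a,d}` is a 2-element orbit,
and `{b,c}` is an orbit written with `b ≤ c`). -/
def DNN (n : ℕ) (z : WB n) : Prop :=
  {i : ℤ | 1 ≤ i ∧ i ≤ (n : ℤ) ∧ (z : Equiv.Perm ℤ) i = -i}.ncard ≤ 1 ∧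
  ¬∃ a b c d : ℤ, a ∈ pmSet n ∧ b ∈ pmSet n ∧ c ∈ pmSet n ∧ d ∈ pmSet n ∧
    (z : Equiv.Perm ℤ) a = d ∧ (z : Equiv.Perm ℤ) b = c ∧
    a < b ∧ b ≤ c ∧ c < d ∧ a ≠ -d

/-- Let `z` be a doubly-nonnesting involution in `W_n`.  If
`z(r) < -r` for some `r ∈ [n]`, then `r ≤ ⌊n/2⌋`. -/
theorem stmt_18 (n r : ℕ) (z : WB n) (hz : z * z = 1) (hdnn : DNN n z)
    (hr1 : 1 ≤ r) (hr2 : r ≤ n) (h : (z : Equiv.Perm ℤ) (r : ℤ) < -(r : ℤ)) :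
    r ≤ n / 2 := by
  set w : Equiv.Perm ℤ := (z : Equiv.Perm ℤ) with hwdef
  obtain ⟨hneg, hfix⟩ := z.2
  have hinv : ∀ i : ℤ, w (w i) = i := by
    intro i
    have h1 : ((z * z : WB n) : Equiv.Perm ℤ) i = i := by rw [hz]; rfl
    simpa [Equiv.Perm.mul_apply] using h1
  have hw0 : w 0 = 0 := by
    have := hneg 0
    simp only [neg_zero] at this
    linarith
  set s : ℤ := -(w (r : ℤ)) with hs
  have hwr : w (r : ℤ) = -s := by omega
  have hsr : (r : ℤ) < s := by omega
  have hws : w (-s) = r := by rw [← hwr, hinv]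
  have hsn : s ≤ (n : ℤ) := by
    by_contra hc
    push_neg at hc
    have habs : (n : ℤ) < |(-s : ℤ)| := by rw [abs_neg, abs_of_pos (by linarith)]; exact hc
    have := hfix (-s) habs
    rw [hws] at this
    omega
  have hbound : ∀ i : ℤ, 1 ≤ i → i ≤ (r : ℤ) → (w i ≤ -s ∨ (r : ℤ) + 1 ≤ w i) := by
    intro i hi1 hi2
    by_contra hc
    push_neg at hc
    obtain ⟨hc1, hc2⟩ := hc
    -- w i ≠ r
    have hwir : w i ≠ (r : ℤ) := by
      intro he
      have : w (w i) = w (r : ℤ) := by rw [he]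
      rw [hinv, hwr] at this
      omega
    have hir : i ≠ (r : ℤ) := by
      intro he
      rw [he, hwr] at hc1
      omega
    have hwi0 : w i ≠ 0 := by
      intro he
      have : w (w i) = w 0 := by rw [he]
      rw [hinv, hw0] at this
      omega
    -- nesting contradiction
    apply hdnn.2
    refine ⟨-s, min i (w i), max i (w i), (r : ℤ), ?_, ?_, ?_, ?_, ?_, ?_, ?_, ?_, ?_, ?_⟩
    · exact ⟨by omega, by rw [abs_neg, abs_of_pos (by omega)]; omega⟩
    · refine ⟨by omega, ?_⟩
      rw [abs_le]; constructor <;> omega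
    · refine ⟨by omega, ?_⟩
      rw [abs_le]; constructor <;> omega
    · exact ⟨by omega, by rw [abs_of_pos (by omega)]; omega⟩
    · exact hws
    · rcases le_total i (w i) with hle | hle
      · rw [min_eq_left hle, max_eq_right hle]
      · rw [min_eq_right hle, max_eq_left hle, hinv]
    · omega
    · exact min_le_max
    · omega
    · omega
  have habs_mem : ∀ i : ℤ, 1 ≤ i → i ≤ (r : ℤ) → (r : ℤ) + 1 ≤ |w i| ∧ |w i| ≤ (n : ℤ) := by
    intro i hi1 hi2
    have hb := hbound i hi1 hi2
    have h1 : (r : ℤ) + 1 ≤ |w i| := by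
      rcases hb with hb | hb
      · rw [abs_of_nonpos (by omega)]; omega
      · rw [abs_of_pos (by omega)]; omega
    refine ⟨h1, ?_⟩
    by_contra hc
    push_neg at hc
    have := hfix (w i) hc
    have h2 : w (w i) = w i := this
    rw [hinv] at h2
    omega
  -- injective map i ↦ |w i| from Icc 1 r to Icc (r+1) n
  have hcard : (Finset.Icc (1 : ℤ) (r : ℤ)).card ≤ (Finset.Icc ((r : ℤ) + 1) (n : ℤ)).card := by
    apply Finset.card_le_card_of_injOn (fun i => |w i|)
    · intro i hi
      simp only [Finset.coe_Icc, Set.mem_Icc, Finset.mem_coe, Finset.mem_Icc] at hi ⊢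
      exact habs_mem i hi.1 hi.2
    · intro i hi j hj he
      simp only [Finset.coe_Icc, Set.mem_Icc] at hi hj
      have : w i = w j ∨ w i = -(w j) := abs_eq_abs.mp he
      rcases this with h1 | h1
      · exact w.injective h1
      · have : w i = w (-j) := by rw [hneg]; exact h1
        have := w.injective this
        omega
  rw [Int.card_Icc, Int.card_Icc] at hcard
  omega
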